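/- arXiv:0901.2164 — 3 statements merged into one kernel-verified Lean document; each statement's English description precedes it below -/
import Mathlib

section
/- Fix a real parameter η ≥ 1 and define d_η on [0, 2 − 1/η] by d_η(r) = min{η+2, 4} − 3r if 0 ≤ r ≤ 1; d_η(r) = (2η − ηr − 1)/(η − r) if 1 ≤ r ≤ 2 − 1/η and η ≥ 2; and d_η(r) = η − 1/(2 − r) if 1 ≤ r ≤ 2 − 1/η and 1 ≤ η ≤ 2. Define d_{2×2}(r) = 4 − 3r for 0 ≤ r ≤ 1 and d_{2×2}(r) = 2 − r for 1 ≤ r ≤ 2. Then d_η(r) ≤ d_{2×2}(r) for all r ∈ [0, 2 − 1/η]; moreover the inequality is strict for all r ∈ (1, 2 − 1/η) when η ≥ 2, and strict for all r ∈ [0, 2 − 1/η] when 1 ≤ η < 2. -/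
open Set

/-- The DMT curve `d_η(r)` of the half-duplex relay network, for
`r ∈ [0, 2 - 1/η]`.  (At `r = 1` the pieces agree, so `if`-branching is
harmless.) -/
noncomputable def dEta (η r : ℝ) : ℝ :=
  if r ≤ 1 then min (η + 2) 4 - 3 * r
  else if 2 ≤ η then (2 * η - η * r - 1) / (η - r)
  else η - 1 / (2 - r)

/-- The DMT of the `2×2` MIMO Rayleigh channel on `[0, 2]`. -/
noncomputable def dMIMO22 (r : ℝ) : ℝ :=
  if r ≤ 1 then 4 - 3 * r else 2 - r

lemma dEta_gt1 (η r : ℝ) (hη : 1 ≤ η) (h1 : 1 < r) (hr2 : r ≤ 2 - 1 / η) :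
    dEta η r < dMIMO22 r := by
  have hη0 : (0:ℝ) < η := by linarith
  have hinv : 0 < 1 / η := by positivity
  have hr2' : r < 2 := by linarith
  have h1' : ¬ r ≤ 1 := not_le.mpr h1
  unfold dEta dMIMO22
  simp only [h1', if_false]
  by_cases h2 : 2 ≤ η
  · simp only [h2, if_true]
    have hd : 0 < η - r := by linarith
    rw [div_lt_iff₀ hd]
    nlinarith [sq_nonneg (r - 1)]
  · simp only [h2, if_false]
    push_neg at h2
    have ht : 0 < 2 - r := by linarith
    have hu : (2 - r) * (1 / (2 - r)) = 1 := mul_one_div_cancel ht.ne'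
    nlinarith [sq_nonneg (2 - r - 1), hu, ht, one_div_pos.mpr ht]

/-- For finite proximity gain `η`, the relay-network DMT is dominated by the
`2×2` MIMO DMT, strictly on `(1, 2 - 1/η)` when `η ≥ 2` and strictly on all
of `[0, 2 - 1/η]` when `1 ≤ η < 2`. -/
theorem dEta_le_MIMO (η : ℝ) (hη : 1 ≤ η) :
    (∀ r ∈ Icc (0:ℝ) (2 - 1 / η), dEta η r ≤ dMIMO22 r) ∧
    (2 ≤ η → ∀ r ∈ Ioo (1:ℝ) (2 - 1 / η), dEta η r < dMIMO22 r) ∧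
    (η < 2 → ∀ r ∈ Icc (0:ℝ) (2 - 1 / η), dEta η r < dMIMO22 r) := by
  refine ⟨?_, ?_, ?_⟩
  · rintro r ⟨hr0, hr2⟩
    by_cases h1 : r ≤ 1
    · unfold dEta dMIMO22
      simp only [h1, if_true]
      have := min_le_right (η + 2) 4
      linarith
    · exact (dEta_gt1 η r hη (not_le.mp h1) hr2).le
  · rintro h2 r ⟨hr1, hr2⟩
    exact dEta_gt1 η r hη hr1 hr2.le
  · rintro h2 r ⟨hr0, hr2⟩
    by_cases h1 : r ≤ 1
    · unfold dEta dMIMO22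
      simp only [h1, if_true]
      have : min (η + 2) 4 = η + 2 := min_eq_left (by linarith)
      rw [this]; linarith
    · exact dEta_gt1 η r hη (not_le.mp h1) hr2
end

section
/- Let ρ > 0 be real, let h_s, h_r ∈ ℂ² with h_s ≠ 0, and let H be the 2×2 complex matrix with columns h_s and h_r. Let h_∥ = (⟨h_s, h_r⟩/‖h_s‖²)·h_s be the orthogonal projection of h_r onto the line spanned by h_s, and h_⊥ = h_r − h_∥. Then det(I + ρ·H·Hᴴ) = (1 + ρ‖h_s‖²)·(1 + ρ·(‖h_⊥‖² + ‖h_∥‖²/(1 + ρ‖h_s‖²))), where Hᴴ denotes the conjugate transpose of H and I the 2×2 identity matrix. -/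
open Matrix

/-- Decomposition of the determinant of `I + ρ H Hᴴ` for a `2×2` complex
matrix `H` with columns `h_s` and `h_r`, into the product of the two
parallel-channel terms `1 + ρ‖h_s‖²` and
`1 + ρ(‖h_⊥‖² + ‖h_∥‖²/(1 + ρ‖h_s‖²))`, where `h_∥` is the orthogonal
projection of `h_r` onto the span of `h_s` and `h_⊥ = h_r − h_∥`. -/
theorem det_MIMO_parallel_decomposition (ρ : ℝ) (hρ : 0 < ρ)
    (hs hr : EuclideanSpace ℂ (Fin 2)) (hs0 : hs ≠ 0)
    (H : Matrix (Fin 2) (Fin 2) ℂ) (hH : ∀ i, H i 0 = hs i ∧ H i 1 = hr i)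
    (hpar hperp : EuclideanSpace ℂ (Fin 2))
    (hpar_def : hpar = ((inner ℂ hs hr : ℂ) / ((‖hs‖ : ℂ) ^ 2)) • hs)
    (hperp_def : hperp = hr - hpar) :
    Matrix.det (1 + (ρ : ℂ) • (H * Hᴴ)) =
      (((1 + ρ * ‖hs‖ ^ 2) *
        (1 + ρ * (‖hperp‖ ^ 2 + ‖hpar‖ ^ 2 / (1 + ρ * ‖hs‖ ^ 2))) : ℝ) : ℂ) := by
  have ha : (0:ℝ) < ‖hs‖ := norm_pos_iff.2 hs0
  have ha2 : (‖hs‖:ℝ)^2 ≠ 0 := by positivity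
  have ht : (1 + ρ * ‖hs‖^2) ≠ 0 := by positivity
  have key : ∀ z : ℂ, ((‖z‖^2 : ℝ) : ℂ) = (starRingEnd ℂ) z * z := by
    intro z
    rw [mul_comm, Complex.mul_conj, Complex.normSq_eq_norm_sq]
  set c : ℂ := inner ℂ hs hr with hc
  have hpar_norm : ‖hpar‖^2 = ‖c‖^2 / ‖hs‖^2 := by
    rw [hpar_def, norm_smul]
    have : ‖(c / ((‖hs‖ : ℂ) ^ 2))‖ = ‖c‖ / ‖hs‖^2 := by
      rw [norm_div]; norm_num
    rw [this]
    field_simp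
  have hperp_norm : ‖hperp‖^2 = ‖hr‖^2 - ‖c‖^2 / ‖hs‖^2 := by
    have hre : RCLike.re (inner ℂ hr hpar : ℂ) = ‖c‖^2 / ‖hs‖^2 := by
      rw [hpar_def, inner_smul_right]
      have h1 : (inner ℂ hr hs : ℂ) = (starRingEnd ℂ) c := by
        rw [hc, ← inner_conj_symm]
      rw [h1]
      have h2 : c / ((‖hs‖ : ℂ) ^ 2) * (starRingEnd ℂ) c = ((‖c‖^2 / ‖hs‖^2 : ℝ) : ℂ) := by
        rw [Complex.ofReal_div, key c]
        push_cast
        ring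
      rw [h2, RCLike.re_to_complex, Complex.ofReal_re]
    rw [hperp_def, @norm_sub_sq ℂ, hre, hpar_norm]
    ring
  have hRHS : ((1 + ρ * ‖hs‖ ^ 2) *
        (1 + ρ * (‖hperp‖ ^ 2 + ‖hpar‖ ^ 2 / (1 + ρ * ‖hs‖ ^ 2))) : ℝ)
      = 1 + ρ * (‖hs‖^2 + ‖hr‖^2) + ρ^2 * (‖hs‖^2 * ‖hr‖^2 - ‖c‖^2) := by
    rw [hperp_norm, hpar_norm]
    field_simp
    ring
  rw [hRHS]
  have h00 := (hH 0).1
  have h01 := (hH 0).2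
  have h10 := (hH 1).1
  have h11 := (hH 1).2
  have normsq2 : ∀ x : EuclideanSpace ℂ (Fin 2), (‖x‖:ℝ)^2 = ‖x 0‖^2 + ‖x 1‖^2 := by
    intro x
    rw [EuclideanSpace.norm_eq, Real.sq_sqrt (by positivity)]
    simp [Fin.sum_univ_two]
  have hsn : ((‖hs‖:ℂ))^2 = (starRingEnd ℂ) (hs 0) * hs 0 + (starRingEnd ℂ) (hs 1) * hs 1 := by
    rw [← key, ← key, ← Complex.ofReal_add, ← normsq2]
    push_cast
    ring
  have hrn : ((‖hr‖:ℂ))^2 = (starRingEnd ℂ) (hr 0) * hr 0 + (starRingEnd ℂ) (hr 1) * hr 1 := by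
    rw [← key, ← key, ← Complex.ofReal_add, ← normsq2]
    push_cast
    ring
  have hcc : c = (starRingEnd ℂ) (hs 0) * hr 0 + (starRingEnd ℂ) (hs 1) * hr 1 := by
    rw [hc, PiLp.inner_apply, Fin.sum_univ_two]
    rw [RCLike.inner_apply', RCLike.inner_apply']
  have hcn : ((‖c‖:ℂ))^2 = (starRingEnd ℂ) c * c := by
    rw [← key]
    push_cast
    ring
  rw [Matrix.det_fin_two]
  push_cast
  simp only [Matrix.add_apply, Matrix.smul_apply, Matrix.mul_apply, Fin.sum_univ_two,
    Matrix.conjTranspose_apply, h00, h01, h10, h11, smul_eq_mul, RCLike.star_def]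
  norm_num [Matrix.one_apply]
  rw [hsn, hrn, hcn, hcc]
  simp only [map_add, _root_.map_mul, RingHomCompTriple.comp_apply, Complex.conj_conj, RingHom.id_apply]
  ring
end

section
/- Let X, Y, Z be mutually independent random variables, where X has the Gamma distribution with shape 2 and rate 1, and Y and Z are exponentially distributed with rate 1. Then for all real numbers α₁, α₂ with 0 ≤ α₁ < 1 and 0 ≤ α₂ < 1, lim_{ρ → ∞} log P(X ≤ ρ^{α₁−1} and Y + Z/(1 + ρX) ≤ ρ^{α₂−1}) / log ρ equals 3α₁ + 2α₂ − 4 if α₁ + α₂ ≤ 1, and equals 2α₁ + α₂ − 3 if α₁ + α₂ ≥ 1. -/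
open MeasureTheory Filter ProbabilityTheory Real Set

namespace JGE


/-- Quadratic lower bound for `exp t - 1 - t` on `[0,1]`. -/
lemma exp_sub_lb {t : ℝ} (h0 : 0 ≤ t) (h1 : t ≤ 1) :
    5 / 18 * t ^ 2 ≤ Real.exp t - 1 - t := by
  have h := Real.exp_bound (x := t) (by rw [abs_of_nonneg h0]; exact h1) (n := 3) (by norm_num)
  rw [abs_of_nonneg h0] at h
  have hs : ∑ m ∈ Finset.range 3, t ^ m / m.factorial = 1 + t + t ^ 2 / 2 := by
    simp [Finset.sum_range_succ]
  rw [hs] at h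
  have h' := (abs_le.mp h).1
  have ht3 : t ^ 3 ≤ t ^ 2 := pow_le_pow_of_le_one h0 h1 (by norm_num)
  norm_num [Nat.factorial] at h'
  nlinarith

lemma exp_sub_ub {t : ℝ} (h0 : 0 ≤ t) (h1 : t ≤ 1) :
    Real.exp t - 1 - t ≤ t ^ 2 := by
  have h := Real.abs_exp_sub_one_sub_id_le (x := t) (by rw [abs_of_nonneg h0]; exact h1)
  exact (abs_le.mp h).2

/-- Bounds for the Gamma(2,1) CDF `G t = 1 - (1+t) exp (-t)` on `(0,1]`. -/
lemma G_lb {t : ℝ} (h0 : 0 ≤ t) (h1 : t ≤ 1) :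
    Real.exp (-1) * (5 / 18) * t ^ 2 ≤ 1 - (1 + t) * Real.exp (-t) := by
  have hmul : Real.exp (-t) * Real.exp t = 1 := by
    rw [← Real.exp_add]; simp
  have hlb := exp_sub_lb h0 h1
  have he1 : Real.exp (-1) ≤ Real.exp (-t) := Real.exp_le_exp.mpr (by linarith)
  have hep : (0:ℝ) < Real.exp (-t) := Real.exp_pos _
  nlinarith [sq_nonneg t]

lemma G_ub {t : ℝ} (h0 : 0 ≤ t) (h1 : t ≤ 1) :
    1 - (1 + t) * Real.exp (-t) ≤ t ^ 2 := by
  have hmul : Real.exp (-t) * Real.exp t = 1 := by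
    rw [← Real.exp_add]; simp
  have hub := exp_sub_ub h0 h1
  have heo : Real.exp (-t) ≤ 1 := Real.exp_le_one_iff.mpr (by linarith)
  have hep : (0:ℝ) < Real.exp (-t) := Real.exp_pos _
  have hlb0 : 0 ≤ Real.exp t - 1 - t := by nlinarith [Real.add_one_le_exp t]
  nlinarith

/-- Lower bound for the difference `G t - G (t/2)` on `(0,1]`. -/
lemma D_lb {t : ℝ} (h0 : 0 ≤ t) (h1 : t ≤ 1) :
    Real.exp (-1) * (1 / 4) * t ^ 2 ≤
      (1 - (1 + t) * Real.exp (-t)) - (1 - (1 + t / 2) * Real.exp (-(t / 2))) := by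
  have hsplit : Real.exp (-(t / 2)) = Real.exp (-t) * Real.exp (t / 2) := by
    rw [← Real.exp_add]; ring_nf
  have hhalf : 1 + t / 2 ≤ Real.exp (t / 2) := by linarith [Real.add_one_le_exp (t / 2)]
  have he1 : Real.exp (-1) ≤ Real.exp (-t) := Real.exp_le_exp.mpr (by linarith)
  have hep : (0:ℝ) < Real.exp (-t) := Real.exp_pos _
  rw [hsplit]
  have h₁ : (1 + t / 2) * (1 + t / 2) ≤ (1 + t / 2) * Real.exp (t / 2) :=
    mul_le_mul_of_nonneg_left hhalf (by linarith)
  have h₂ : Real.exp (-t) * ((1 + t / 2) * (1 + t / 2)) ≤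
      Real.exp (-t) * ((1 + t / 2) * Real.exp (t / 2)) :=
    mul_le_mul_of_nonneg_left h₁ hep.le
  have h₃ : Real.exp (-1) * (t ^ 2 / 4) ≤ Real.exp (-t) * (t ^ 2 / 4) :=
    mul_le_mul_of_nonneg_right he1 (by positivity)
  nlinarith

/-- Bounds for the Exp(1) CDF `H t = 1 - exp (-t)` on `(0,1]`. -/
lemma H_lb {t : ℝ} (h0 : 0 ≤ t) (h1 : t ≤ 1) :
    Real.exp (-1) * t ≤ 1 - Real.exp (-t) := by
  have hmul : Real.exp (-t) * Real.exp t = 1 := by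
    rw [← Real.exp_add]; simp
  have he1 : Real.exp (-1) ≤ Real.exp (-t) := Real.exp_le_exp.mpr (by linarith)
  have hep : (0:ℝ) < Real.exp (-t) := Real.exp_pos _
  nlinarith [Real.add_one_le_exp t]

lemma H_ub (t : ℝ) : 1 - Real.exp (-t) ≤ t := by
  nlinarith [Real.add_one_le_exp (-t)]



/-- If `f` is eventually squeezed between `c₁ ρ^γ` and `c₂ ρ^γ`, then
`log (f ρ) / log ρ → γ`. -/
lemma tendsto_log_div_log {f : ℝ → ℝ} {γ c₁ c₂ : ℝ} (hc₁ : 0 < c₁)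
    (h : ∀ᶠ ρ : ℝ in atTop, c₁ * ρ ^ γ ≤ f ρ ∧ f ρ ≤ c₂ * ρ ^ γ) :
    Tendsto (fun ρ => Real.log (f ρ) / Real.log ρ) atTop (nhds γ) := by
  have hc₂ : 0 < c₂ := by
    obtain ⟨ρ, hρ, hρ1⟩ := (h.and (eventually_gt_atTop (0:ℝ))).exists
    have hp : (0:ℝ) < ρ ^ γ := Real.rpow_pos_of_pos hρ1 γ
    nlinarith [hρ.1, hρ.2]
  have hlim : ∀ c : ℝ, Tendsto (fun ρ : ℝ => Real.log c / Real.log ρ + γ) atTop (nhds γ) := by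
    intro c
    have h0 : Tendsto (fun ρ : ℝ => Real.log c / Real.log ρ) atTop (nhds 0) :=
      Tendsto.div_atTop tendsto_const_nhds Real.tendsto_log_atTop
    simpa using h0.add (tendsto_const_nhds (x := γ))
  refine tendsto_of_tendsto_of_tendsto_of_le_of_le' (hlim c₁) (hlim c₂) ?_ ?_
  · filter_upwards [h, eventually_ge_atTop (Real.exp 1)] with ρ hρ hρe
    have hρ1 : (0:ℝ) < ρ := lt_of_lt_of_le (Real.exp_pos 1) hρe
    have hlog : 1 ≤ Real.log ρ := by
      have := Real.log_le_log (Real.exp_pos 1) hρe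
      rwa [Real.log_exp] at this
    have hp : (0:ℝ) < ρ ^ γ := Real.rpow_pos_of_pos hρ1 γ
    have hfpos : 0 < f ρ := lt_of_lt_of_le (by positivity) hρ.1
    have hle : Real.log c₁ + γ * Real.log ρ ≤ Real.log (f ρ) := by
      have := Real.log_le_log (by positivity) hρ.1
      rwa [Real.log_mul hc₁.ne' hp.ne', Real.log_rpow hρ1] at this
    rw [div_add' _ _ _ (show Real.log ρ ≠ 0 by linarith)]
    apply div_le_div_of_nonneg_right ?_ (by linarith)
    linarith
  · filter_upwards [h, eventually_ge_atTop (Real.exp 1)] with ρ hρ hρe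
    have hρ1 : (0:ℝ) < ρ := lt_of_lt_of_le (Real.exp_pos 1) hρe
    have hlog : 1 ≤ Real.log ρ := by
      have := Real.log_le_log (Real.exp_pos 1) hρe
      rwa [Real.log_exp] at this
    have hp : (0:ℝ) < ρ ^ γ := Real.rpow_pos_of_pos hρ1 γ
    have hfpos : 0 < f ρ := lt_of_lt_of_le (by positivity) hρ.1
    have hle : Real.log (f ρ) ≤ Real.log c₂ + γ * Real.log ρ := by
      have := Real.log_le_log hfpos hρ.2
      rwa [Real.log_mul hc₂.ne' hp.ne', Real.log_rpow hρ1] at this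
    rw [div_add' _ _ _ (show Real.log ρ ≠ 0 by linarith)]
    apply div_le_div_of_nonneg_right ?_ (by linarith)
    linarith



lemma hasDerivAt_aux (x : ℝ) :
    HasDerivAt (fun y => -((1 + y) * Real.exp (-y))) (x * Real.exp (-x)) x := by
  have h1 : HasDerivAt (fun y : ℝ => 1 + y) 1 x := (hasDerivAt_id x).const_add 1
  have h2 : HasDerivAt (fun y : ℝ => Real.exp (-y)) (Real.exp (-x) * (-1)) x :=
    ((hasDerivAt_id x).neg).exp
  refine (h1.mul h2).neg.congr_deriv ?_
  ring

lemma integral_id_mul_exp {t : ℝ} (ht : 0 ≤ t) :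
    ∫ x in (0)..t, x * Real.exp (-x) = 1 - (1 + t) * Real.exp (-t) := by
  rw [intervalIntegral.integral_eq_sub_of_hasDerivAt (fun x _ => hasDerivAt_aux x) ?_]
  · simp [Real.exp_zero]
    ring
  · apply Continuous.intervalIntegrable
    continuity

lemma gamma_two_Iic (t : ℝ) :
    gammaMeasure 2 1 (Iic t) =
      ENNReal.ofReal (if 0 ≤ t then 1 - (1 + t) * Real.exp (-t) else 0) := by
  rw [gammaMeasure, withDensity_apply _ measurableSet_Iic]
  split_ifs with ht
  · rw [lintegral_Iic_eq_lintegral_Iio_add_Icc _ ht, lintegral_gammaPDF_of_nonpos le_rfl,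
      zero_add]
    have hcong : ∫⁻ x in Icc 0 t, gammaPDF 2 1 x
        = ∫⁻ x in Icc 0 t, ENNReal.ofReal (x * Real.exp (-x)) := by
      refine setLIntegral_congr_fun measurableSet_Icc ?_
      intro x hx
      rw [gammaPDF_of_nonneg hx.1]
      congr 1
      rw [Real.Gamma_two]
      norm_num
    rw [hcong]
    have hint : IntegrableOn (fun x => x * Real.exp (-x)) (Icc 0 t) :=
      Continuous.integrableOn_Icc (by continuity)
    rw [← MeasureTheory.ofReal_integral_eq_lintegral_ofReal hint ?_]
    · rw [integral_Icc_eq_integral_Ioc, ← intervalIntegral.integral_of_le ht,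
        integral_id_mul_exp ht]
    · rw [EventuallyLE, ae_restrict_iff' measurableSet_Icc]
      exact ae_of_all _ fun x hx => by
        have := hx.1
        positivity
  · rw [setLIntegral_congr_fun measurableSet_Iic
      (fun x (hx : x ≤ t) => gammaPDF_of_neg (by linarith [not_le.mp ht]))]
    simp

lemma exp_one_Iic (t : ℝ) :
    expMeasure 1 (Iic t) = ENNReal.ofReal (if 0 ≤ t then 1 - Real.exp (-t) else 0) := by
  rw [expMeasure, gammaMeasure, withDensity_apply _ measurableSet_Iic,
    show (gammaPDF 1 1) = exponentialPDF 1 from rfl,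
    lintegral_exponentialPDF_eq_antiDeriv zero_lt_one t, one_mul]

lemma gamma_Iio_zero (a r : ℝ) : gammaMeasure a r (Iio 0) = 0 := by
  rw [gammaMeasure, withDensity_apply _ measurableSet_Iio]
  exact lintegral_gammaPDF_of_nonpos le_rfl

lemma exp_Iio_zero (r : ℝ) : expMeasure r (Iio 0) = 0 := gamma_Iio_zero 1 r





lemma H_mono {s t : ℝ} (h : s ≤ t) : 1 - Real.exp (-s) ≤ 1 - Real.exp (-t) := by
  have := Real.exp_le_exp.mpr (neg_le_neg h)
  linarith

lemma H_le_one {t : ℝ} : 1 - Real.exp (-t) ≤ 1 := by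
  linarith [Real.exp_pos (-t)]

/-- Bounds for `H (k * ρ^β)`-type factors, with exponent `min β 0`. -/
lemma exists_bounds_H {β k : ℝ} (hk : 0 < k) :
    ∃ c c' : ℝ, 0 < c ∧ ∀ᶠ ρ : ℝ in atTop,
      c * ρ ^ (min β 0) ≤ 1 - Real.exp (-(k * ρ ^ β)) ∧
      1 - Real.exp (-(k * ρ ^ β)) ≤ c' * ρ ^ (min β 0) := by
  rcases lt_or_ge β 0 with hβ | hβ
  · refine ⟨Real.exp (-1) * k, k, by positivity, ?_⟩
    have htend : Tendsto (fun ρ : ℝ => ρ ^ β) atTop (nhds 0) := by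
      simpa using tendsto_rpow_neg_atTop (neg_pos.mpr hβ)
    have hev : ∀ᶠ ρ : ℝ in atTop, ρ ^ β ≤ 1 / k :=
      htend.eventually (eventually_le_nhds (by positivity))
    filter_upwards [hev, eventually_gt_atTop (0:ℝ)] with ρ hle hρ0
    have hp : 0 < ρ ^ β := Real.rpow_pos_of_pos hρ0 β
    have ht1 : k * ρ ^ β ≤ 1 := by
      rw [mul_comm, ← le_div_iff₀ hk]; exact hle
    rw [min_eq_left hβ.le]
    constructor
    · have := H_lb (t := k * ρ ^ β) (by positivity) ht1
      calc Real.exp (-1) * k * ρ ^ β = Real.exp (-1) * (k * ρ ^ β) := by ring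
        _ ≤ _ := this
    · calc 1 - Real.exp (-(k * ρ ^ β)) ≤ k * ρ ^ β := H_ub _
        _ = k * ρ ^ β := rfl
  · refine ⟨1 - Real.exp (-k), 1, ?_, ?_⟩
    · have : Real.exp (-k) < 1 := Real.exp_lt_one_iff.mpr (by linarith)
      linarith
    · filter_upwards [eventually_ge_atTop (1:ℝ)] with ρ hρ1
      have h1 : (1:ℝ) ≤ ρ ^ β := by
        have := Real.rpow_le_rpow_of_exponent_le hρ1 hβ
        rwa [Real.rpow_zero] at this
      rw [min_eq_right hβ, Real.rpow_zero, mul_one, one_mul]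
      refine ⟨H_mono ?_, H_le_one⟩
      nlinarith

/-- The main analytic sandwich lemma. -/
lemma tendsto_sandwich (α₁ α₂ : ℝ) (h₁0 : 0 ≤ α₁) (h₁1 : α₁ < 1) (h₂0 : 0 ≤ α₂) (h₂1 : α₂ < 1)
    (P : ℝ → ℝ)
    (hkey : ∀ᶠ ρ : ℝ in atTop,
      ((1 - (1 + ρ ^ (α₁-1)) * Real.exp (-(ρ ^ (α₁-1)))) -
        (1 - (1 + ρ ^ (α₁-1) / 2) * Real.exp (-(ρ ^ (α₁-1) / 2)))) *
        (1 - Real.exp (-((1/2) * ρ ^ (α₂-1)))) *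
        (1 - Real.exp (-((1/4) * ρ ^ (α₁+α₂-1)))) ≤ P ρ ∧
      P ρ ≤ (1 - (1 + ρ ^ (α₁-1)) * Real.exp (-(ρ ^ (α₁-1)))) *
        (1 - Real.exp (-(ρ ^ (α₂-1)))) *
        (1 - Real.exp (-(2 * ρ ^ (α₁+α₂-1))))) :
    Tendsto (fun ρ => Real.log (P ρ) / Real.log ρ) atTop
      (nhds (2*α₁ + α₂ - 3 + min (α₁+α₂-1) 0)) := by
  have hρev : ∀ᶠ ρ : ℝ in atTop, (1:ℝ) ≤ ρ := eventually_ge_atTop 1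
  -- bounds for the Gamma factor (lower version: difference)
  have hB1l : ∀ᶠ ρ : ℝ in atTop,
      Real.exp (-1) * (1/4) * ρ ^ (2*(α₁-1)) ≤
        (1 - (1 + ρ ^ (α₁-1)) * Real.exp (-(ρ ^ (α₁-1)))) -
        (1 - (1 + ρ ^ (α₁-1) / 2) * Real.exp (-(ρ ^ (α₁-1) / 2))) ∧
      (1 - (1 + ρ ^ (α₁-1)) * Real.exp (-(ρ ^ (α₁-1)))) -
        (1 - (1 + ρ ^ (α₁-1) / 2) * Real.exp (-(ρ ^ (α₁-1) / 2))) ≤ 1 * ρ ^ (2*(α₁-1)) := by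
    filter_upwards [hρev] with ρ hρ1
    have hρ0 : (0:ℝ) < ρ := by linarith
    have ha0 : 0 < ρ ^ (α₁-1) := Real.rpow_pos_of_pos hρ0 _
    have ha1 : ρ ^ (α₁-1) ≤ 1 := Real.rpow_le_one_of_one_le_of_nonpos hρ1 (by linarith)
    have hsq : ρ ^ (2*(α₁-1)) = (ρ ^ (α₁-1)) ^ 2 := by
      rw [mul_comm, Real.rpow_mul hρ0.le, Real.rpow_two]
    rw [hsq]
    constructor
    · exact D_lb ha0.le ha1
    · have h1 := G_ub ha0.le ha1
      have h2 := G_lb (t := ρ ^ (α₁-1) / 2) (by positivity) (by linarith)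
      have h3 : 0 ≤ Real.exp (-1) * (5/18) * (ρ ^ (α₁-1) / 2) ^ 2 := by positivity
      rw [one_mul]
      linarith
  -- bounds for the Gamma factor (upper version)
  have hB1u : ∀ᶠ ρ : ℝ in atTop,
      Real.exp (-1) * (5/18) * ρ ^ (2*(α₁-1)) ≤
        1 - (1 + ρ ^ (α₁-1)) * Real.exp (-(ρ ^ (α₁-1))) ∧
      1 - (1 + ρ ^ (α₁-1)) * Real.exp (-(ρ ^ (α₁-1))) ≤ 1 * ρ ^ (2*(α₁-1)) := by
    filter_upwards [hρev] with ρ hρ1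
    have hρ0 : (0:ℝ) < ρ := by linarith
    have ha0 : 0 < ρ ^ (α₁-1) := Real.rpow_pos_of_pos hρ0 _
    have ha1 : ρ ^ (α₁-1) ≤ 1 := Real.rpow_le_one_of_one_le_of_nonpos hρ1 (by linarith)
    have hsq : ρ ^ (2*(α₁-1)) = (ρ ^ (α₁-1)) ^ 2 := by
      rw [mul_comm, Real.rpow_mul hρ0.le, Real.rpow_two]
    rw [hsq, one_mul]
    exact ⟨G_lb ha0.le ha1, G_ub ha0.le ha1⟩
  -- bounds for the Y factor
  have hB2 : ∀ (k : ℝ), 0 < k → k ≤ 1 → ∀ᶠ ρ : ℝ in atTop,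
      Real.exp (-1) * k * ρ ^ (α₂-1) ≤ 1 - Real.exp (-(k * ρ ^ (α₂-1))) ∧
      1 - Real.exp (-(k * ρ ^ (α₂-1))) ≤ k * ρ ^ (α₂-1) := by
    intro k hk hk1
    filter_upwards [hρev] with ρ hρ1
    have hρ0 : (0:ℝ) < ρ := by linarith
    have hb0 : 0 < ρ ^ (α₂-1) := Real.rpow_pos_of_pos hρ0 _
    have hb1 : ρ ^ (α₂-1) ≤ 1 := Real.rpow_le_one_of_one_le_of_nonpos hρ1 (by linarith)
    have ht1 : k * ρ ^ (α₂-1) ≤ 1 := by nlinarith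
    have := H_lb (t := k * ρ ^ (α₂-1)) (by positivity) ht1
    exact ⟨by nlinarith, H_ub _⟩
  obtain ⟨c₃, c₃', hc₃, hB3l⟩ := exists_bounds_H (β := α₁+α₂-1) (k := (1/4:ℝ)) (by norm_num)
  obtain ⟨d₃, d₃', hd₃, hB3u⟩ := exists_bounds_H (β := α₁+α₂-1) (k := (2:ℝ)) (by norm_num)
  -- the three tendsto facts for the lower product
  have T1l := tendsto_log_div_log (by positivity : (0:ℝ) < Real.exp (-1) * (1/4)) hB1l
  have T2l := tendsto_log_div_log (by positivity : (0:ℝ) < Real.exp (-1) * (1/2))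
    (hB2 (1/2) (by norm_num) (by norm_num))
  have T3l := tendsto_log_div_log hc₃ hB3l
  have T1u := tendsto_log_div_log (by positivity : (0:ℝ) < Real.exp (-1) * (5/18)) hB1u
  have T2u := tendsto_log_div_log (c₁ := Real.exp (-1)) (c₂ := (1:ℝ))
    (f := fun ρ => 1 - Real.exp (-(ρ ^ (α₂-1)))) (Real.exp_pos _)
    (by filter_upwards [hB2 1 one_pos le_rfl] with ρ h
        simp only [one_mul, mul_one] at h ⊢
        exact h)
  have T3u := tendsto_log_div_log hd₃ hB3u
  have hval : 2*(α₁-1) + (α₂-1) + min (α₁+α₂-1) 0 = 2*α₁ + α₂ - 3 + min (α₁+α₂-1) 0 := by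
    ring
  rw [← hval]
  have TLo := (T1l.add T2l).add T3l
  have TUp := (T1u.add T2u).add T3u
  have hlogρ : ∀ᶠ ρ : ℝ in atTop, 1 ≤ Real.log ρ ∧ (0:ℝ) < ρ := by
    filter_upwards [eventually_ge_atTop (Real.exp 1)] with ρ hρ
    have hρ0 : (0:ℝ) < ρ := lt_of_lt_of_le (Real.exp_pos 1) hρ
    have := Real.log_le_log (Real.exp_pos 1) hρ
    rw [Real.log_exp] at this
    exact ⟨this, hρ0⟩
  have TLo' : Tendsto (fun ρ : ℝ =>
      Real.log (((1 - (1 + ρ ^ (α₁-1)) * Real.exp (-(ρ ^ (α₁-1)))) -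
        (1 - (1 + ρ ^ (α₁-1) / 2) * Real.exp (-(ρ ^ (α₁-1) / 2)))) *
        (1 - Real.exp (-((1/2) * ρ ^ (α₂-1)))) *
        (1 - Real.exp (-((1/4) * ρ ^ (α₁+α₂-1))))) / Real.log ρ) atTop
      (nhds (2*(α₁-1) + (α₂-1) + min (α₁+α₂-1) 0)) := by
    refine TLo.congr' ?_
    filter_upwards [hB1l, hB2 (1/2) (by norm_num) (by norm_num), hB3l, hlogρ]
      with ρ h1 h2 h3 hρ
    have hρ0 := hρ.2
    have p1 : 0 < (1 - (1 + ρ ^ (α₁-1)) * Real.exp (-(ρ ^ (α₁-1)))) -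
        (1 - (1 + ρ ^ (α₁-1) / 2) * Real.exp (-(ρ ^ (α₁-1) / 2))) :=
      lt_of_lt_of_le (by positivity) h1.1
    have p2 : 0 < 1 - Real.exp (-((1/2) * ρ ^ (α₂-1))) :=
      lt_of_lt_of_le (by positivity) h2.1
    have p3 : 0 < 1 - Real.exp (-((1/4) * ρ ^ (α₁+α₂-1))) := by
      refine lt_of_lt_of_le ?_ h3.1
      have : (0:ℝ) < ρ ^ (min (α₁+α₂-1) 0) := Real.rpow_pos_of_pos hρ0 _
      positivity
    show _ = _
    rw [Real.log_mul (by positivity) p3.ne', Real.log_mul p1.ne' p2.ne', add_div, add_div]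
  have TUp' : Tendsto (fun ρ : ℝ =>
      Real.log ((1 - (1 + ρ ^ (α₁-1)) * Real.exp (-(ρ ^ (α₁-1)))) *
        (1 - Real.exp (-(ρ ^ (α₂-1)))) *
        (1 - Real.exp (-(2 * ρ ^ (α₁+α₂-1))))) / Real.log ρ) atTop
      (nhds (2*(α₁-1) + (α₂-1) + min (α₁+α₂-1) 0)) := by
    refine TUp.congr' ?_
    filter_upwards [hB1u, hB2 1 one_pos le_rfl, hB3u, hlogρ] with ρ h1 h2 h3 hρ
    have hρ0 := hρ.2
    have p1 : 0 < 1 - (1 + ρ ^ (α₁-1)) * Real.exp (-(ρ ^ (α₁-1))) :=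
      lt_of_lt_of_le (by positivity) h1.1
    have p2 : 0 < 1 - Real.exp (-(ρ ^ (α₂-1))) := by
      have h2' := h2.1
      simp only [one_mul, mul_one] at h2'
      have hpp : (0:ℝ) < Real.exp (-1) * ρ ^ (α₂-1) := by positivity
      linarith
    have p3 : 0 < 1 - Real.exp (-(2 * ρ ^ (α₁+α₂-1))) := by
      refine lt_of_lt_of_le ?_ h3.1
      have : (0:ℝ) < ρ ^ (min (α₁+α₂-1) 0) := Real.rpow_pos_of_pos hρ0 _
      positivity
    show _ = _
    rw [Real.log_mul (by positivity) p3.ne', Real.log_mul p1.ne' p2.ne', add_div, add_div]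
  refine tendsto_of_tendsto_of_tendsto_of_le_of_le' TLo' TUp' ?_ ?_
  · filter_upwards [hkey, hB1l, hB2 (1/2) (by norm_num) (by norm_num), hB3l, hlogρ]
      with ρ hk h1 h2 h3 hρ
    have hρ0 := hρ.2
    have p1 : 0 < (1 - (1 + ρ ^ (α₁-1)) * Real.exp (-(ρ ^ (α₁-1)))) -
        (1 - (1 + ρ ^ (α₁-1) / 2) * Real.exp (-(ρ ^ (α₁-1) / 2))) :=
      lt_of_lt_of_le (by positivity) h1.1
    have p2 : 0 < 1 - Real.exp (-((1/2) * ρ ^ (α₂-1))) :=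
      lt_of_lt_of_le (by positivity) h2.1
    have p3 : 0 < 1 - Real.exp (-((1/4) * ρ ^ (α₁+α₂-1))) := by
      refine lt_of_lt_of_le ?_ h3.1
      have : (0:ℝ) < ρ ^ (min (α₁+α₂-1) 0) := Real.rpow_pos_of_pos hρ0 _
      positivity
    exact div_le_div_of_nonneg_right
      (Real.log_le_log (by positivity) hk.1) (by linarith [hρ.1])
  · filter_upwards [hkey, hB1l, hB2 (1/2) (by norm_num) (by norm_num), hB3l, hlogρ]
      with ρ hk h1 h2 h3 hρ
    have hρ0 := hρ.2
    have p1 : 0 < (1 - (1 + ρ ^ (α₁-1)) * Real.exp (-(ρ ^ (α₁-1)))) -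
        (1 - (1 + ρ ^ (α₁-1) / 2) * Real.exp (-(ρ ^ (α₁-1) / 2))) :=
      lt_of_lt_of_le (by positivity) h1.1
    have p2 : 0 < 1 - Real.exp (-((1/2) * ρ ^ (α₂-1))) :=
      lt_of_lt_of_le (by positivity) h2.1
    have p3 : 0 < 1 - Real.exp (-((1/4) * ρ ^ (α₁+α₂-1))) := by
      refine lt_of_lt_of_le ?_ h3.1
      have : (0:ℝ) < ρ ^ (min (α₁+α₂-1) 0) := Real.rpow_pos_of_pos hρ0 _
      positivity
    have hPpos : 0 < P ρ := lt_of_lt_of_le (by positivity) hk.1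
    exact div_le_div_of_nonneg_right
      (Real.log_le_log hPpos hk.2) (by linarith [hρ.1])




lemma G_nonneg {t : ℝ} (h0 : 0 ≤ t) : 0 ≤ 1 - (1 + t) * Real.exp (-t) := by
  have hmul : Real.exp (-t) * Real.exp t = 1 := by rw [← Real.exp_add]; simp
  nlinarith [Real.add_one_le_exp t, Real.exp_pos (-t)]

lemma H_nonneg {t : ℝ} (h0 : 0 ≤ t) : 0 ≤ 1 - Real.exp (-t) := by
  have := Real.exp_le_one_iff.mpr (by linarith : -t ≤ 0)
  linarith



end JGE

open JGE in




/-- Joint high-SNR exponential order of the event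
`{g₁² ≤ ρ^{α₁−1}, g₂² ≤ ρ^{α₂−1}}`, where `g₁² = X ~ Gamma(2,1)` and
`g₂² = Y + Z/(1 + ρX)` with `Y, Z ~ Exp(1)` and `X, Y, Z` mutually
independent:
the exponent is `3α₁ + 2α₂ − 4` when `α₁ + α₂ ≤ 1` and `2α₁ + α₂ − 3` when
`α₁ + α₂ ≥ 1` (the two expressions agree when `α₁ + α₂ = 1`). -/
theorem joint_gain_exponent {Ω : Type*} [MeasureSpace Ω]
    [IsProbabilityMeasure (ℙ : Measure Ω)]
    (X Y Z : Ω → ℝ) (hX : Measurable X) (hY : Measurable Y) (hZ : Measurable Z)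
    (hindep : iIndepFun
      ![X, Y, Z] ℙ)
    (hlawX : Measure.map X ℙ = gammaMeasure 2 1)
    (hlawY : Measure.map Y ℙ = expMeasure 1)
    (hlawZ : Measure.map Z ℙ = expMeasure 1)
    (α₁ α₂ : ℝ) (h₁0 : 0 ≤ α₁) (h₁1 : α₁ < 1) (h₂0 : 0 ≤ α₂) (h₂1 : α₂ < 1) :
    Tendsto (fun ρ : ℝ =>
        Real.log (ℙ {ω | X ω ≤ ρ ^ (α₁ - 1) ∧
          Y ω + Z ω / (1 + ρ * X ω) ≤ ρ ^ (α₂ - 1)}).toReal / Real.log ρ)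
      atTop
      (nhds (if α₁ + α₂ ≤ 1 then 3 * α₁ + 2 * α₂ - 4 else 2 * α₁ + α₂ - 3)) := by
  have hmin : (if α₁ + α₂ ≤ 1 then 3*α₁+2*α₂-4 else 2*α₁+α₂-3)
      = 2*α₁+α₂-3 + min (α₁+α₂-1) 0 := by
    split_ifs with h
    · rw [min_eq_left (by linarith)]; ring
    · rw [min_eq_right (by linarith [not_le.mp h])]; ring
  rw [hmin]
  -- marginal laws
  have pX : ∀ t : ℝ, ℙ (X ⁻¹' Iic t)
      = ENNReal.ofReal (if 0 ≤ t then 1 - (1 + t) * Real.exp (-t) else 0) := fun t => by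
    rw [← Measure.map_apply hX measurableSet_Iic, hlawX, gamma_two_Iic]
  have pY : ∀ t : ℝ, ℙ (Y ⁻¹' Iic t)
      = ENNReal.ofReal (if 0 ≤ t then 1 - Real.exp (-t) else 0) := fun t => by
    rw [← Measure.map_apply hY measurableSet_Iic, hlawY, exp_one_Iic]
  have pZ : ∀ t : ℝ, ℙ (Z ⁻¹' Iic t)
      = ENNReal.ofReal (if 0 ≤ t then 1 - Real.exp (-t) else 0) := fun t => by
    rw [← Measure.map_apply hZ measurableSet_Iic, hlawZ, exp_one_Iic]
  have pXIoc : ∀ s t : ℝ, s ≤ t →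
      ℙ (X ⁻¹' Ioc s t) = ℙ (X ⁻¹' Iic t) - ℙ (X ⁻¹' Iic s) := by
    intro s t hst
    have hpre : X ⁻¹' Ioc s t = X ⁻¹' Iic t \ X ⁻¹' Iic s := by
      rw [← Set.Iic_sdiff_Iic, Set.preimage_diff]
    rw [hpre, measure_diff (Set.preimage_mono (Set.Iic_subset_Iic.mpr hst))
      ((hX measurableSet_Iic).nullMeasurableSet) (measure_ne_top ℙ _)]
  -- independence product
  have prod3 : ∀ A B C : Set ℝ, MeasurableSet A → MeasurableSet B → MeasurableSet C →
      ℙ (X ⁻¹' A ∩ Y ⁻¹' B ∩ Z ⁻¹' C) = ℙ (X ⁻¹' A) * ℙ (Y ⁻¹' B) * ℙ (Z ⁻¹' C) := by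
    intro A B C hA hB hC
    have h := hindep.measure_inter_preimage_eq_mul Finset.univ (sets := ![A, B, C])
      (by intro i _; fin_cases i <;> simp <;> assumption)
    have hl : (⋂ i ∈ Finset.univ, ![X, Y, Z] i ⁻¹' ![A, B, C] i)
        = X ⁻¹' A ∩ Y ⁻¹' B ∩ Z ⁻¹' C := by
      ext ω
      simp [Fin.forall_fin_succ, and_assoc]
    rw [hl] at h
    rw [h, Fin.prod_univ_three]
    simp
  -- the null set of negative values
  set N : Set Ω := X ⁻¹' Iio 0 ∪ Y ⁻¹' Iio 0 ∪ Z ⁻¹' Iio 0 with hNdef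
  have hN : ℙ N = 0 := by
    refine measure_union_null (measure_union_null ?_ ?_) ?_
    · rw [← Measure.map_apply hX measurableSet_Iio, hlawX, gamma_Iio_zero]
    · rw [← Measure.map_apply hY measurableSet_Iio, hlawY, exp_Iio_zero]
    · rw [← Measure.map_apply hZ measurableSet_Iio, hlawZ, exp_Iio_zero]
  apply tendsto_sandwich α₁ α₂ h₁0 h₁1 h₂0 h₂1
  filter_upwards [eventually_ge_atTop (1:ℝ)] with ρ hρ1
  have hρ0 : (0:ℝ) < ρ := lt_of_lt_of_le one_pos hρ1
  have ha0 : 0 < ρ ^ (α₁-1) := Real.rpow_pos_of_pos hρ0 _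
  have ha1 : ρ ^ (α₁-1) ≤ 1 := Real.rpow_le_one_of_one_le_of_nonpos hρ1 (by linarith)
  have hb0 : 0 < ρ ^ (α₂-1) := Real.rpow_pos_of_pos hρ0 _
  have hc0 : 0 < ρ ^ (α₁+α₂-1) := Real.rpow_pos_of_pos hρ0 _
  have hq0 : 0 < ρ ^ (α₁:ℝ) := Real.rpow_pos_of_pos hρ0 _
  have hra : ρ ^ (α₁:ℝ) = ρ * ρ ^ (α₁-1) := by
    conv_lhs => rw [show α₁ = 1 + (α₁-1) by ring]
    rw [Real.rpow_add hρ0, Real.rpow_one]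
  have hrb : ρ ^ (α₁+α₂-1) = ρ ^ (α₁:ℝ) * ρ ^ (α₂-1) := by
    conv_lhs => rw [show α₁+α₂-1 = α₁ + (α₂-1) by ring]
    rw [Real.rpow_add hρ0]
  set E : Set Ω := {ω | X ω ≤ ρ ^ (α₁ - 1) ∧
      Y ω + Z ω / (1 + ρ * X ω) ≤ ρ ^ (α₂ - 1)} with hEdef
  -- upper inclusion
  have hsubU : E \ N ⊆ X ⁻¹' Iic (ρ ^ (α₁-1)) ∩ Y ⁻¹' Iic (ρ ^ (α₂-1))
      ∩ Z ⁻¹' Iic (2 * ρ ^ (α₁+α₂-1)) := by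
    rintro ω ⟨⟨hXa, hsum⟩, hn⟩
    simp only [hNdef, Set.mem_union, Set.mem_preimage, Set.mem_Iio] at hn
    push_neg at hn
    obtain ⟨⟨h0X, h0Y⟩, h0Z⟩ := hn
    have hden : 0 < 1 + ρ * X ω := by nlinarith
    have hZq : 0 ≤ Z ω / (1 + ρ * X ω) := div_nonneg h0Z hden.le
    refine ⟨⟨hXa, show Y ω ≤ ρ ^ (α₂-1) by linarith⟩, ?_⟩
    show Z ω ≤ 2 * ρ ^ (α₁+α₂-1)
    have h1 : Z ω / (1 + ρ * X ω) ≤ ρ ^ (α₂-1) := by linarith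
    have h2 : Z ω ≤ ρ ^ (α₂-1) * (1 + ρ * X ω) := by
      rw [div_le_iff₀ hden] at h1; linarith [h1]
    have h3 : 1 + ρ * X ω ≤ 1 + ρ * ρ ^ (α₁-1) := by nlinarith
    have h4 : ρ ^ (α₂-1) * (1 + ρ * X ω) ≤ ρ ^ (α₂-1) * (1 + ρ * ρ ^ (α₁-1)) :=
      mul_le_mul_of_nonneg_left h3 hb0.le
    have h5 : ρ ^ (α₂-1) * (1 + ρ * ρ ^ (α₁-1)) = ρ ^ (α₂-1) + ρ ^ (α₁+α₂-1) := by
      rw [hrb, hra]; ring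
    have h6 : ρ ^ (α₂-1) ≤ ρ ^ (α₁+α₂-1) :=
      Real.rpow_le_rpow_of_exponent_le hρ1 (by linarith)
    linarith
  -- lower inclusion
  have hsubL : X ⁻¹' Ioc (ρ ^ (α₁-1) / 2) (ρ ^ (α₁-1))
      ∩ Y ⁻¹' Iic ((1/2) * ρ ^ (α₂-1)) ∩ Z ⁻¹' Iic ((1/4) * ρ ^ (α₁+α₂-1)) ⊆ E := by
    rintro ω ⟨⟨hXm, hYm⟩, hZm⟩
    obtain ⟨hXm1, hXm2⟩ := hXm
    have hYm' : Y ω ≤ (1/2) * ρ ^ (α₂-1) := hYm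
    have hZm' : Z ω ≤ (1/4) * ρ ^ (α₁+α₂-1) := hZm
    have hden2 : ρ ^ (α₁:ℝ) / 2 ≤ 1 + ρ * X ω := by
      have hmm : ρ * (ρ ^ (α₁-1) / 2) ≤ ρ * X ω :=
        mul_le_mul_of_nonneg_left (le_of_lt hXm1) hρ0.le
      rw [hra]
      linarith
    have hdpos : 0 < ρ ^ (α₁:ℝ) / 2 := by positivity
    have hq : Z ω / (1 + ρ * X ω) ≤ ((1/4) * ρ ^ (α₁+α₂-1)) / (ρ ^ (α₁:ℝ) / 2) :=
      div_le_div₀ (by positivity) hZm' hdpos hden2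
    have heq : ((1/4) * ρ ^ (α₁+α₂-1)) / (ρ ^ (α₁:ℝ) / 2) = (1/2) * ρ ^ (α₂-1) := by
      rw [hrb]
      field_simp
      ring
    rw [heq] at hq
    exact ⟨hXm2, by linarith⟩
  -- measure bounds
  have hU : ℙ E ≤ ℙ (X ⁻¹' Iic (ρ ^ (α₁-1)) ∩ Y ⁻¹' Iic (ρ ^ (α₂-1))
      ∩ Z ⁻¹' Iic (2 * ρ ^ (α₁+α₂-1))) := by
    calc ℙ E = ℙ (E \ N) := (measure_diff_null hN).symm
      _ ≤ _ := measure_mono hsubU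
  have hL : ℙ (X ⁻¹' Ioc (ρ ^ (α₁-1) / 2) (ρ ^ (α₁-1))
      ∩ Y ⁻¹' Iic ((1/2) * ρ ^ (α₂-1)) ∩ Z ⁻¹' Iic ((1/4) * ρ ^ (α₁+α₂-1))) ≤ ℙ E :=
    measure_mono hsubL
  -- evaluating the rectangle probabilities
  have hGa : 0 ≤ 1 - (1 + ρ ^ (α₁-1)) * Real.exp (-(ρ ^ (α₁-1))) := G_nonneg ha0.le
  have hGa2 : 0 ≤ 1 - (1 + ρ ^ (α₁-1) / 2) * Real.exp (-(ρ ^ (α₁-1) / 2)) :=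
    G_nonneg (by positivity)
  have hD : 0 ≤ (1 - (1 + ρ ^ (α₁-1)) * Real.exp (-(ρ ^ (α₁-1))))
      - (1 - (1 + ρ ^ (α₁-1) / 2) * Real.exp (-(ρ ^ (α₁-1) / 2))) := by
    have := D_lb ha0.le ha1
    nlinarith [sq_nonneg (ρ ^ (α₁-1)), Real.exp_pos (-1:ℝ)]
  have hUval : (ℙ (X ⁻¹' Iic (ρ ^ (α₁-1)) ∩ Y ⁻¹' Iic (ρ ^ (α₂-1))
      ∩ Z ⁻¹' Iic (2 * ρ ^ (α₁+α₂-1)))).toReal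
      = (1 - (1 + ρ ^ (α₁-1)) * Real.exp (-(ρ ^ (α₁-1)))) *
        (1 - Real.exp (-(ρ ^ (α₂-1)))) *
        (1 - Real.exp (-(2 * ρ ^ (α₁+α₂-1)))) := by
    rw [prod3 _ _ _ measurableSet_Iic measurableSet_Iic measurableSet_Iic,
      pX, pY, pZ, if_pos ha0.le, if_pos hb0.le, if_pos (by positivity : (0:ℝ) ≤ 2 * ρ ^ (α₁+α₂-1)),
      ENNReal.toReal_mul, ENNReal.toReal_mul,
      ENNReal.toReal_ofReal hGa, ENNReal.toReal_ofReal (H_nonneg hb0.le),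
      ENNReal.toReal_ofReal (H_nonneg (by positivity))]
  have hLval : (ℙ (X ⁻¹' Ioc (ρ ^ (α₁-1) / 2) (ρ ^ (α₁-1))
      ∩ Y ⁻¹' Iic ((1/2) * ρ ^ (α₂-1)) ∩ Z ⁻¹' Iic ((1/4) * ρ ^ (α₁+α₂-1)))).toReal
      = ((1 - (1 + ρ ^ (α₁-1)) * Real.exp (-(ρ ^ (α₁-1)))) -
        (1 - (1 + ρ ^ (α₁-1) / 2) * Real.exp (-(ρ ^ (α₁-1) / 2)))) *
        (1 - Real.exp (-((1/2) * ρ ^ (α₂-1)))) *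
        (1 - Real.exp (-((1/4) * ρ ^ (α₁+α₂-1)))) := by
    have hIoc : ℙ (X ⁻¹' Ioc (ρ ^ (α₁-1) / 2) (ρ ^ (α₁-1)))
        = ENNReal.ofReal ((1 - (1 + ρ ^ (α₁-1)) * Real.exp (-(ρ ^ (α₁-1)))) -
          (1 - (1 + ρ ^ (α₁-1) / 2) * Real.exp (-(ρ ^ (α₁-1) / 2)))) := by
      rw [pXIoc _ _ (by linarith), pX, pX, if_pos ha0.le, if_pos (by positivity : (0:ℝ) ≤ ρ ^ (α₁-1) / 2),
        ← ENNReal.ofReal_sub _ hGa2]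
    have hmeasIoc : MeasurableSet (Ioc (ρ ^ (α₁-1) / 2) (ρ ^ (α₁-1))) := measurableSet_Ioc
    rw [prod3 _ _ _ hmeasIoc measurableSet_Iic measurableSet_Iic,
      hIoc, pY, pZ, if_pos (by positivity : (0:ℝ) ≤ (1/2) * ρ ^ (α₂-1)),
      if_pos (by positivity : (0:ℝ) ≤ (1/4) * ρ ^ (α₁+α₂-1)),
      ENNReal.toReal_mul, ENNReal.toReal_mul,
      ENNReal.toReal_ofReal hD, ENNReal.toReal_ofReal (H_nonneg (by positivity)),
      ENNReal.toReal_ofReal (H_nonneg (by positivity))]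
  constructor
  · rw [← hLval]
    exact ENNReal.toReal_mono (measure_ne_top ℙ _) hL
  · rw [← hUval]
    exact ENNReal.toReal_mono (measure_ne_top ℙ _) hU
end
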